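/- Let n ≥ 2, let m ∈ {0,1,…,n−1} with gcd(n, m) = 1, and let F(x) = circ(f_0(x),…,f_{n−1}(x)) be a circulant matrix function satisfying F(x + ω^m y) = Ω^{−m} F(y) Ω^{m} F(x) for all x, y ∈ ℂ. Then there exists an exponential function g: ℂ → ℂ such that f_j(x) = (1/n) Σ_{k=0}^{n−1} ω^{−jk} g(ω^k x) for every j ∈ {0,…,n−1} and every x ∈ ℂ. -/
import Mathlib


/-- Let `n ≥ 2`, let `m ∈ {0,…,n−1}` with `gcd(n,m) = 1`, and
let `F(x) = circ(f₀(x),…,f_{n−1}(x))` be a circulant matrix function satisfying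
`F(x + ω^m y) = Ω^(−m) F(y) Ω^m F(x)` for all `x, y ∈ ℂ`. Then there exists an
exponential function `g : ℂ → ℂ` such that
`f_j(x) = (1/n) Σ_{k=0}^{n−1} ω^(−jk) g(ω^k x)` for every `j` and every `x`. -/
theorem general_solution_of_circulant_equation_coprime
    (n : ℕ) (hn : 2 ≤ n)
    (ω : ℂ) (hω : ω = Complex.exp (2 * Real.pi * Complex.I / n))
    (m : ℕ) (hm : m < n) (hcop : Nat.gcd n m = 1)
    (Om : Matrix (Fin n) (Fin n) ℂ)
    (hOm : Om = Matrix.diagonal fun j : Fin n => ω ^ (j : ℕ))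
    (f : Fin n → ℂ → ℂ)
    (F : ℂ → Matrix (Fin n) (Fin n) ℂ)
    (hF : ∀ (x : ℂ) (j k : Fin n), F x j k = f (k - j) x)
    (heq : ∀ x y : ℂ, F (x + ω ^ m * y) = Om⁻¹ ^ m * F y * Om ^ m * F x) :
    ∃ g : ℂ → ℂ,
      (∀ x y : ℂ, g (x + y) = g x * g y) ∧
      (∀ (j : Fin n) (x : ℂ),
        f j x = (1 / n : ℂ) * ∑ k : Fin n,
          ω ^ (-((j : ℕ) * (k : ℕ) : ℤ)) * g (ω ^ (k : ℕ) * x)) := by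
  classical
  haveI : NeZero n := ⟨by omega⟩
  have hnne : (n : ℂ) ≠ 0 := Nat.cast_ne_zero.mpr (by omega)
  have hprim : IsPrimitiveRoot ω n := by
    rw [hω]; exact Complex.isPrimitiveRoot_exp n (by omega)
  have hωn : ω ^ n = 1 := hprim.pow_eq_one
  have hωne : ω ≠ 0 := hprim.ne_zero (by omega)
  have hmod : ∀ a b : ℕ, a % n = b % n → ω ^ a = ω ^ b := by
    intro a b h
    conv_lhs => rw [← Nat.div_add_mod a n]
    conv_rhs => rw [← Nat.div_add_mod b n]
    rw [pow_add, pow_add, pow_mul, pow_mul, hωn, one_pow, one_pow, h]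
  set L : ℕ → ℂ → ℂ := fun r x => ∑ j : Fin n, ω ^ ((j : ℕ) * r) * f j x with hLdef
  have hLper : ∀ a b : ℕ, a % n = b % n → L a = L b := by
    intro a b h; funext x
    exact Finset.sum_congr rfl fun j _ => by
      rw [hmod ((j : ℕ) * a) ((j : ℕ) * b) (Nat.ModEq.mul_left _ h)]
  -- inverse of Ω
  have hOminv : Om⁻¹ = Matrix.diagonal fun j : Fin n => (ω ^ (j : ℕ))⁻¹ := by
    apply Matrix.inv_eq_right_inv
    rw [hOm, Matrix.diagonal_mul_diagonal]
    have : (fun i : Fin n => ω ^ (i : ℕ) * (ω ^ (i : ℕ))⁻¹) = fun _ => (1 : ℂ) := by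
      funext i; exact mul_inv_cancel₀ (pow_ne_zero _ hωne)
    rw [this, Matrix.diagonal_one]
  -- entrywise functional equation
  have hB : ∀ (x y : ℂ) (t : Fin n),
      f t (x + ω ^ m * y) =
        ∑ k : Fin n, ω ^ ((k : ℕ) * m) * f k y * f (t - k) x := by
    intro x y t
    have h := congrFun (congrFun (heq x y) 0) t
    rw [hOminv, hOm, Matrix.diagonal_pow, Matrix.diagonal_pow] at h
    rw [Matrix.mul_apply] at h
    simp only [Matrix.mul_diagonal, Matrix.diagonal_mul, Pi.pow_apply, hF,
      Fin.val_zero, pow_zero, inv_one, one_pow, one_mul, sub_zero] at h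
    rw [h]
    refine Finset.sum_congr rfl fun k _ => ?_
    rw [pow_mul]; ring
  -- DFT of the functional equation
  have hA : ∀ (r : ℕ) (x y : ℂ), L r (x + ω ^ m * y) = L (r + m) y * L r x := by
    intro r x y
    show (∑ t : Fin n, ω ^ ((t : ℕ) * r) * f t (x + ω ^ m * y)) = _
    rw [show L (r + m) y * L r x
        = ∑ k : Fin n, ∑ s : Fin n,
            (ω ^ ((k : ℕ) * (r + m)) * f k y) * (ω ^ ((s : ℕ) * r) * f s x) from
      Finset.sum_mul_sum _ _ _ _]
    calc (∑ t : Fin n, ω ^ ((t : ℕ) * r) * f t (x + ω ^ m * y))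
        = ∑ t : Fin n, ∑ k : Fin n,
            ω ^ ((t : ℕ) * r) * (ω ^ ((k : ℕ) * m) * f k y * f (t - k) x) := by
          refine Finset.sum_congr rfl fun t _ => ?_
          rw [hB x y t, Finset.mul_sum]
      _ = ∑ k : Fin n, ∑ t : Fin n,
            ω ^ ((t : ℕ) * r) * (ω ^ ((k : ℕ) * m) * f k y * f (t - k) x) :=
          Finset.sum_comm
      _ = ∑ k : Fin n, ∑ s : Fin n,
            (ω ^ ((k : ℕ) * (r + m)) * f k y) * (ω ^ ((s : ℕ) * r) * f s x) := by
          refine Finset.sum_congr rfl fun k _ => ?_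
          refine (Fintype.sum_equiv (Equiv.addRight k)
            (fun s => (ω ^ ((k : ℕ) * (r + m)) * f k y) * (ω ^ ((s : ℕ) * r) * f s x))
            (fun t => ω ^ ((t : ℕ) * r) * (ω ^ ((k : ℕ) * m) * f k y * f (t - k) x))
            fun s => ?_).symm
          show (ω ^ ((k : ℕ) * (r + m)) * f k y) * (ω ^ ((s : ℕ) * r) * f s x)
              = ω ^ (((s + k : Fin n) : ℕ) * r) *
                  (ω ^ ((k : ℕ) * m) * f k y * f (s + k - k) x)
          rw [add_sub_cancel_right]
          have hv : ((s + k : Fin n) : ℕ) ≡ ((s : ℕ) + (k : ℕ)) [MOD n] := by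
            rw [Fin.val_add]; exact Nat.mod_modEq _ n
          rw [hmod (((s + k : Fin n) : ℕ) * r) (((s : ℕ) + (k : ℕ)) * r)
            (Nat.ModEq.mul_right r hv)]
          rw [Nat.add_mul, Nat.mul_add, pow_add, pow_add]
          ring
  -- solving congruences mod n using coprimality
  have hmunit : IsUnit ((m : ℕ) : ZMod n) :=
    (ZMod.isUnit_iff_coprime m n).mpr (Nat.coprime_comm.mp hcop)
  have key : ∀ t r : ℕ, ∃ s : ℕ, (t + s * m) % n = r % n := by
    intro t r
    obtain ⟨u, hu⟩ := hmunit
    refine ⟨((((r : ZMod n) - (t : ZMod n)) * ↑u⁻¹ : ZMod n)).val, ?_⟩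
    have h2 : ((t + ((((r : ZMod n) - (t : ZMod n)) * ↑u⁻¹ : ZMod n)).val * m : ℕ) : ZMod n)
        = ((r : ℕ) : ZMod n) := by
      push_cast
      rw [ZMod.natCast_val, ZMod.cast_id, mul_assoc, ← hu, Units.inv_mul, mul_one,
        add_sub_cancel]
    exact (ZMod.natCast_eq_natCast_iff _ _ _).mp h2
  have hdown : ∀ (s r : ℕ), (∀ x, L (r + s * m) x = 0) → ∀ x, L r x = 0 := by
    intro s
    induction s with
    | zero => intro r h x; simpa using h x
    | succ s ih =>
      intro r h x
      have h1 : ∀ x, L (r + m) x = 0 := by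
        apply ih (r + m)
        intro x'
        have e : r + m + s * m = r + (s + 1) * m := by ring
        rw [e]; exact h x'
      have h2 := hA r x 0
      rw [mul_zero, add_zero] at h2
      calc L r x = L (r + m) 0 * L r x := h2
        _ = 0 := by rw [h1 0, zero_mul]
  -- the shift lemma
  have hshift : ∀ (r : ℕ) (y : ℂ), L (r + m) y = L r (ω ^ m * y) := by
    by_cases hz : ∀ x, L 0 x = 0
    · have hall : ∀ r x, L r x = 0 := by
        intro r
        obtain ⟨s, hs⟩ := key r 0
        exact hdown s r fun x => by rw [hLper _ _ hs]; exact hz x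
      intro r y; rw [hall, hall]
    · push_neg at hz
      have hnzr : ∀ r : ℕ, ∃ x, L r x ≠ 0 := by
        intro r
        by_contra h
        push_neg at h
        obtain ⟨s, hs⟩ := key 0 r
        obtain ⟨x0, hx0⟩ := hz
        exact hx0 (hdown s 0 (fun x => by
          rw [hLper _ _ hs]; exact h x) x0)
      have hone : ∀ r : ℕ, L r 0 = 1 := by
        intro r
        set t : ℕ := (((r : ZMod n) - (m : ZMod n))).val with ht
        have htm : (t + m) % n = r % n := by
          have : ((t + m : ℕ) : ZMod n) = ((r : ℕ) : ZMod n) := by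
            push_cast
            rw [ht, ZMod.natCast_val, ZMod.cast_id, sub_add_cancel]
          exact (ZMod.natCast_eq_natCast_iff _ _ _).mp this
        obtain ⟨x, hx⟩ := hnzr t
        have h2 := hA t x 0
        rw [mul_zero, add_zero] at h2
        have h3 : L (t + m) 0 = 1 :=
          mul_right_cancel₀ hx (h2.symm.trans (one_mul (L t x)).symm)
        rw [← hLper (t + m) r htm]; exact h3
      intro r y
      have h := hA r 0 y
      rw [zero_add] at h
      rw [hone r, mul_one] at h
      exact h.symm
  -- L k is L 0 twisted by ω^k
  have hks : ∀ (k : ℕ) (y : ℂ), L k y = L 0 (ω ^ k * y) := by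
    have hsm : ∀ (s : ℕ) (y : ℂ), L (s * m) y = L 0 (ω ^ (s * m) * y) := by
      intro s
      induction s with
      | zero => intro y; simp
      | succ s ih =>
        intro y
        have e : (s + 1) * m = s * m + m := by ring
        rw [e, hshift (s * m) y, ih, pow_add, mul_assoc]
    intro k y
    obtain ⟨s, hs⟩ := key 0 k
    rw [zero_add] at hs
    rw [← hLper (s * m) k hs, hsm, hmod (s * m) k hs]
  -- DFT inversion identity
  have hinv : ∀ (j : Fin n) (x : ℂ),
      (∑ k : Fin n, ω ^ (-((j : ℕ) * (k : ℕ) : ℤ)) * L (k : ℕ) x) = (n : ℂ) * f j x := by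
    intro j x
    have hterm : ∀ t k : Fin n,
        ω ^ (-((j : ℕ) * (k : ℕ) : ℤ)) * ω ^ ((t : ℕ) * (k : ℕ))
          = (ω ^ (((t : ℕ) : ℤ) - ((j : ℕ) : ℤ))) ^ (k : ℕ) := by
      intro t k
      rw [← zpow_natCast ω ((t : ℕ) * (k : ℕ)), ← zpow_add₀ hωne,
        ← zpow_natCast (ω ^ (((t : ℕ) : ℤ) - ((j : ℕ) : ℤ))) (k : ℕ), ← zpow_mul]
      congr 1
      push_cast
      ring
    calc (∑ k : Fin n, ω ^ (-((j : ℕ) * (k : ℕ) : ℤ)) * L (k : ℕ) x)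
        = ∑ k : Fin n, ∑ t : Fin n,
            (ω ^ (((t : ℕ) : ℤ) - ((j : ℕ) : ℤ))) ^ (k : ℕ) * f t x := by
          refine Finset.sum_congr rfl fun k _ => ?_
          show ω ^ (-((j : ℕ) * (k : ℕ) : ℤ)) *
              (∑ t : Fin n, ω ^ ((t : ℕ) * (k : ℕ)) * f t x) = _
          rw [Finset.mul_sum]
          exact Finset.sum_congr rfl fun t _ => by rw [← mul_assoc, hterm]
      _ = ∑ t : Fin n,
            (∑ k : Fin n, (ω ^ (((t : ℕ) : ℤ) - ((j : ℕ) : ℤ))) ^ (k : ℕ)) * f t x := by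
          rw [Finset.sum_comm]
          exact Finset.sum_congr rfl fun t _ => (Finset.sum_mul _ _ _).symm
      _ = (n : ℂ) * f j x := by
          rw [Finset.sum_eq_single j]
          · rw [sub_self, zpow_zero]
            simp
          · intro t _ htj
            have hd : ((t : ℕ) : ℤ) - ((j : ℕ) : ℤ) ≠ 0 := by
              intro h
              apply htj
              have : (t : ℕ) = (j : ℕ) := by omega
              exact Fin.ext this
            have hcne : ω ^ (((t : ℕ) : ℤ) - ((j : ℕ) : ℤ)) ≠ 1 := by
              intro h
              rw [hprim.zpow_eq_one_iff_dvd] at h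
              obtain ⟨c, hc⟩ := h
              have h1 : ((t : ℕ) : ℤ) < n := by exact_mod_cast t.isLt
              have h2 : ((j : ℕ) : ℤ) < n := by exact_mod_cast j.isLt
              have h3 : (0 : ℤ) ≤ ((t : ℕ) : ℤ) := Int.natCast_nonneg _
              have h4 : (0 : ℤ) ≤ ((j : ℕ) : ℤ) := Int.natCast_nonneg _
              have h5 : (0 : ℤ) < (n : ℤ) := by exact_mod_cast (by omega : 0 < n)
              rcases lt_trichotomy c 0 with hc0 | hc0 | hc0
              · nlinarith [Int.le_of_lt_add_one (show c < 0 + 1 by omega)]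
              · apply hd; rw [hc, hc0, mul_zero]
              · nlinarith [Int.add_one_le_iff.mpr hc0]
            have hcn : (ω ^ (((t : ℕ) : ℤ) - ((j : ℕ) : ℤ))) ^ n = 1 := by
              rw [← zpow_natCast (ω ^ (((t : ℕ) : ℤ) - ((j : ℕ) : ℤ))) n, ← zpow_mul,
                mul_comm, zpow_mul, zpow_natCast, hωn, one_zpow]
            rw [Fin.sum_univ_eq_sum_range
              (fun k => (ω ^ (((t : ℕ) : ℤ) - ((j : ℕ) : ℤ))) ^ k) n,
              geom_sum_eq hcne, hcn, sub_self, zero_div, zero_mul]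
          · intro h; exact absurd (Finset.mem_univ j) h
  -- assemble
  refine ⟨L 0, ?_, ?_⟩
  · intro x w
    have hpm : ω ^ m ≠ 0 := pow_ne_zero _ hωne
    have h := hA 0 x (w / ω ^ m)
    rw [mul_comm (ω ^ m) (w / ω ^ m), div_mul_cancel₀ w hpm] at h
    rw [zero_add] at h
    rw [hks m (w / ω ^ m), mul_comm (ω ^ m) (w / ω ^ m), div_mul_cancel₀ w hpm] at h
    rw [h, mul_comm]
  · intro j x
    have h := hinv j x
    have hrw : (∑ k : Fin n, ω ^ (-((j : ℕ) * (k : ℕ) : ℤ)) * L 0 (ω ^ (k : ℕ) * x))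
        = ∑ k : Fin n, ω ^ (-((j : ℕ) * (k : ℕ) : ℤ)) * L (k : ℕ) x :=
      Finset.sum_congr rfl fun k _ => by rw [← hks (k : ℕ) x]
    rw [hrw, h]
    field_simp
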